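/- Let A = B + C with ‖e^{Bt}‖ ≤ e^{−γt} for all t ≥ 0 where γ > 0, C strictly upper triangular in a (c+1)×(c+1) block decomposition preserved by B, and ‖C‖ ≤ (c+1)‖F₂‖. If (c+1)‖F₂‖/γ ≤ 1, then ‖e^{At}‖ ≤ c+1 for all t ≥ 0. -/

import Mathlib

open NormedSpace intervalIntegral MeasureTheory Nat

section DysonAux

variable {A : Type*} [NormedRing A] [NormedAlgebra ℝ A] [CompleteSpace A]

/-- One step of the Dyson iteration. -/
noncomputable def dysonT (B C : A) (f : ℝ → A) : ℝ → A :=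
  fun t => exp (t • B) * ∫ s in (0:ℝ)..t, exp (-s • B) * (C * f s)

lemma expB_mul (B : A) (a b : ℝ) :
    exp (a • B) * exp (b • B) = exp ((a + b) • B) := by
  rw [add_smul]
  letI : NormedAlgebra ℚ A := NormedAlgebra.restrictScalars ℚ ℝ A
  exact (exp_add_of_commute (((Commute.refl B).smul_left a).smul_right b)).symm

lemma expB_cont (B : A) : Continuous fun t : ℝ => exp (t • B) :=
  letI : NormedAlgebra ℚ A := NormedAlgebra.restrictScalars ℚ ℝ A
  exp_continuous.comp (continuous_id.smul continuous_const)

lemma integrand_cont (B C : A) {f : ℝ → A} (hf : Continuous f) :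
    Continuous fun s : ℝ => exp (-s • B) * (C * f s) :=
  (((expB_cont B).comp continuous_neg).mul (continuous_const.mul hf))

lemma dysonT_cont (B C : A) {f : ℝ → A} (hf : Continuous f) :
    Continuous (dysonT B C f) :=
  (expB_cont B).mul (intervalIntegral.continuous_primitive
    (fun a b => ((integrand_cont B C hf).intervalIntegrable a b)) 0)

lemma dysonT_eq (B C : A) {f : ℝ → A} (hf : Continuous f) (t : ℝ) :
    dysonT B C f t = ∫ s in (0:ℝ)..t, exp ((t - s) • B) * (C * f s) := by
  unfold dysonT
  have h := (ContinuousLinearMap.mul ℝ A (exp (t • B))).intervalIntegral_comp_comm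
    (μ := volume) ((integrand_cont B C hf).intervalIntegrable 0 t)
  simp only [ContinuousLinearMap.mul_apply'] at h
  rw [← h]
  refine intervalIntegral.integral_congr fun s _ => ?_
  rw [← mul_assoc, expB_mul, ← sub_eq_add_neg]

lemma dysonT_add (B C : A) {f g : ℝ → A} (hf : Continuous f) (hg : Continuous g) (t : ℝ) :
    dysonT B C (fun s => f s + g s) t = dysonT B C f t + dysonT B C g t := by
  unfold dysonT
  rw [← mul_add, ← intervalIntegral.integral_add ((integrand_cont B C hf).intervalIntegrable 0 t)
    ((integrand_cont B C hg).intervalIntegrable 0 t)]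
  congr 1
  refine intervalIntegral.integral_congr fun s _ => ?_
  simp [mul_add]

lemma duhamel (B C : A) (t : ℝ) :
    exp (t • (B + C)) = exp (t • B) + dysonT B C (fun s => exp (s • (B + C))) t := by
  have key : ∀ s : ℝ, HasDerivAt (fun s : ℝ => exp (-s • B) * exp (s • (B + C)))
      (exp (-s • B) * (C * exp (s • (B + C)))) s := by
    intro s
    have h1 : HasDerivAt (fun s : ℝ => exp (-s • B)) (-(exp (-s • B) * B)) s := by
      have := (hasDerivAt_exp_smul_const (𝕂 := ℝ) B (-s)).scomp s (hasDerivAt_neg s)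
      simpa [Function.comp_def] using this
    have h2 : HasDerivAt (fun s : ℝ => exp (s • (B + C))) ((B + C) * exp (s • (B + C))) s :=
      hasDerivAt_exp_smul_const' (B + C) s
    have h3 := h1.mul h2
    convert h3 using 1
    · rfl
    noncomm_ring
  have hcont : Continuous fun s : ℝ => exp (-s • B) * (C * exp (s • (B + C))) :=
    integrand_cont B C (expB_cont (B + C))
  have ftc := intervalIntegral.integral_eq_sub_of_hasDerivAt
    (fun s _ => key s) (hcont.intervalIntegrable 0 t)
  unfold dysonT
  rw [ftc]
  have h1 : exp (t • B) * exp (-t • B) = 1 := by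
    rw [expB_mul]
    simp
  simp only [neg_zero, zero_smul, exp_zero, one_mul, mul_one]
  rw [mul_sub, ← mul_assoc, h1, one_mul, mul_one]
  abel

lemma dysonT_norm_le (B C : A) {f : ℝ → A} (hf : Continuous f) {γ β : ℝ} (hβ : 0 ≤ β)
    (hB : ∀ t : ℝ, 0 ≤ t → ‖exp (t • B)‖ ≤ Real.exp (-γ * t)) (hCβ : ‖C‖ ≤ β) (k : ℕ)
    (hfb : ∀ s : ℝ, 0 ≤ s → ‖f s‖ ≤ Real.exp (-γ * s) * (β * s) ^ k / k !) :
    ∀ t : ℝ, 0 ≤ t →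
      ‖dysonT B C f t‖ ≤ Real.exp (-γ * t) * (β * t) ^ (k + 1) / (k + 1)! := by
  intro t ht
  rw [dysonT_eq B C hf t]
  have hF : Continuous fun s : ℝ => exp ((t - s) • B) * (C * f s) :=
    ((expB_cont B).comp (continuous_const.sub continuous_id)).mul (continuous_const.mul hf)
  have hg : Continuous fun s : ℝ => Real.exp (-γ * t) * β ^ (k + 1) * s ^ k / k ! :=
    (continuous_const.mul (continuous_pow k)).div_const _
  calc ‖∫ s in (0:ℝ)..t, exp ((t - s) • B) * (C * f s)‖
      ≤ ∫ s in (0:ℝ)..t, ‖exp ((t - s) • B) * (C * f s)‖ :=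
        intervalIntegral.norm_integral_le_integral_norm ht
    _ ≤ ∫ s in (0:ℝ)..t, Real.exp (-γ * t) * β ^ (k + 1) * s ^ k / k ! := by
        refine intervalIntegral.integral_mono_on ht (hF.norm.intervalIntegrable 0 t)
          (hg.intervalIntegrable 0 t) (fun s hs => ?_)
        have h1 : ‖exp ((t - s) • B)‖ ≤ Real.exp (-γ * (t - s)) :=
          hB _ (by linarith [hs.1, hs.2])
        have h2 : ‖f s‖ ≤ Real.exp (-γ * s) * (β * s) ^ k / k ! := hfb s hs.1
        have h3 : ‖C * f s‖ ≤ β * (Real.exp (-γ * s) * (β * s) ^ k / k !) :=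
          (norm_mul_le _ _).trans (mul_le_mul hCβ h2 (norm_nonneg _) hβ)
        calc ‖exp ((t - s) • B) * (C * f s)‖ ≤ ‖exp ((t - s) • B)‖ * ‖C * f s‖ :=
              norm_mul_le _ _
          _ ≤ Real.exp (-γ * (t - s)) * (β * (Real.exp (-γ * s) * (β * s) ^ k / k !)) :=
              mul_le_mul h1 h3 (norm_nonneg _) (Real.exp_nonneg _)
          _ = Real.exp (-γ * t) * β ^ (k + 1) * s ^ k / k ! := by
              rw [mul_pow, show Real.exp (-γ * (t - s)) = Real.exp (-γ * t) * Real.exp (γ * s)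
                from by rw [← Real.exp_add]; ring_nf, show Real.exp (-γ * s)
                = (Real.exp (γ * s))⁻¹ from by rw [← Real.exp_neg]; ring_nf]
              field_simp
              ring
    _ = Real.exp (-γ * t) * (β * t) ^ (k + 1) / (k + 1)! := by
        simp only [div_eq_mul_inv]
        rw [intervalIntegral.integral_mul_const, intervalIntegral.integral_const_mul,
          integral_pow]
        rw [mul_pow, Nat.factorial_succ]
        push_cast
        field_simp
        ring

lemma dysonT_iter_cont (B C : A) : ∀ (n : ℕ) {f : ℝ → A}, Continuous f →
    Continuous ((dysonT B C)^[n] f) := by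
  intro n
  induction n with
  | zero => intro f hf; simpa using hf
  | succ n ih =>
    intro f hf
    rw [Function.iterate_succ_apply]
    exact ih (dysonT_cont B C hf)

lemma dysonT_iter_zero (B C : A) : ∀ (n : ℕ) (f : ℝ → A), Continuous f →
    (∀ (s : Fin n → ℝ), (∀ i, 0 ≤ s i) → ∀ r : ℝ, 0 ≤ r →
      (List.ofFn fun i => exp (s i • B) * C).prod * f r = 0) →
    ∀ t : ℝ, 0 ≤ t → (dysonT B C)^[n] f t = 0 := by
  intro n
  induction n with
  | zero =>
    intro f hf h t ht
    simpa using h (fun i => 0) (fun i => le_refl 0) t ht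
  | succ n ih =>
    intro f hf h t ht
    rw [Function.iterate_succ_apply]
    refine ih (dysonT B C f) (dysonT_cont B C hf) ?_ t ht
    intro s hs r hr
    set P := (List.ofFn fun i => exp (s i • B) * C).prod with hP
    rw [dysonT_eq B C hf r]
    have hF : Continuous fun σ : ℝ => exp ((r - σ) • B) * (C * f σ) :=
      ((expB_cont B).comp (continuous_const.sub continuous_id)).mul (continuous_const.mul hf)
    have h2 := (ContinuousLinearMap.mul ℝ A P).intervalIntegral_comp_comm
      (μ := volume) (hF.intervalIntegrable 0 r)
    simp only [ContinuousLinearMap.mul_apply'] at h2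
    rw [← h2]
    have heq : Set.EqOn (fun σ : ℝ => P * (exp ((r - σ) • B) * (C * f σ)))
        (fun _ => (0 : A)) (Set.uIcc 0 r) := by
      intro σ hσ
      rw [Set.uIcc_of_le hr] at hσ
      have hkey := h (Fin.snoc s (r - σ)) ?_ σ hσ.1
      · have hprod : (List.ofFn fun i : Fin (n + 1) =>
            exp ((Fin.snoc s (r - σ) : Fin (n+1) → ℝ) i • B) * C).prod
            = P * (exp ((r - σ) • B) * C) := by
          rw [List.ofFn_succ']
          simp only [Fin.snoc_castSucc, Fin.snoc_last, List.concat_eq_append,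
            List.prod_append, List.prod_cons, List.prod_nil, mul_one]
          rfl
        rw [hprod] at hkey
        show P * (exp ((r - σ) • B) * (C * f σ)) = 0
        calc P * (exp ((r - σ) • B) * (C * f σ))
            = P * (exp ((r - σ) • B) * C) * f σ := by noncomm_ring
          _ = 0 := hkey
      · intro i
        refine Fin.lastCases ?_ ?_ i
        · simpa using sub_nonneg.mpr hσ.2
        · intro j; simpa using hs j
    rw [intervalIntegral.integral_congr heq]
    simp

lemma dyson_step (B C : A) : ∀ n : ℕ, ∀ t : ℝ,
    (dysonT B C)^[n] (fun t => exp (t • (B + C))) t =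
      (dysonT B C)^[n] (fun t => exp (t • B)) t +
      (dysonT B C)^[n + 1] (fun t => exp (t • (B + C))) t := by
  intro n
  induction n with
  | zero =>
    intro t
    simpa using duhamel B C t
  | succ n ih =>
    intro t
    have hu : Continuous fun t : ℝ => exp (t • (B + C)) := expB_cont (B + C)
    have hE : Continuous fun t : ℝ => exp (t • B) := expB_cont B
    rw [Function.iterate_succ_apply' (dysonT B C) n]
    have hfun : (dysonT B C)^[n] (fun t => exp (t • (B + C))) =
        fun t => (dysonT B C)^[n] (fun t => exp (t • B)) t +
          (dysonT B C)^[n + 1] (fun t => exp (t • (B + C))) t := funext ih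
    rw [hfun, dysonT_add B C (dysonT_iter_cont B C n hE) (dysonT_iter_cont B C (n + 1) hu) t,
      ← Function.iterate_succ_apply' (dysonT B C) n, ← Function.iterate_succ_apply' (dysonT B C) (n + 1)]

lemma dyson_sum (B C : A) : ∀ n : ℕ, ∀ t : ℝ,
    exp (t • (B + C)) =
      (∑ k ∈ Finset.range n, (dysonT B C)^[k] (fun t => exp (t • B)) t) +
      (dysonT B C)^[n] (fun t => exp (t • (B + C))) t := by
  intro n
  induction n with
  | zero => intro t; simp
  | succ n ih =>
    intro t
    rw [ih t, dyson_step B C n t, Finset.sum_range_succ]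
    abel

lemma dyson_iterE_bound (B C : A) {γ β : ℝ} (hβ : 0 ≤ β)
    (hB : ∀ t : ℝ, 0 ≤ t → ‖exp (t • B)‖ ≤ Real.exp (-γ * t)) (hCβ : ‖C‖ ≤ β) :
    ∀ k : ℕ, ∀ t : ℝ, 0 ≤ t →
      ‖(dysonT B C)^[k] (fun t => exp (t • B)) t‖ ≤ Real.exp (-γ * t) * (β * t) ^ k / k ! := by
  intro k
  induction k with
  | zero => intro t ht; simpa using hB t ht
  | succ k ih =>
    intro t ht
    rw [Function.iterate_succ_apply']
    exact dysonT_norm_le B C (dysonT_iter_cont B C k (expB_cont B)) hβ hB hCβ k ih t ht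

end DysonAux

/-- Let `A = B + C`, where `‖e^{Bt}‖ ≤ e^{-γt}` for `t ≥ 0` with `γ > 0`, `C` is strictly
upper triangular in a `(c+1)×(c+1)` block decomposition preserved by `B` (so that every
product of `c+1` factors `e^{Bs} C` vanishes), and `‖C‖ ≤ (c+1)‖F₂‖`.
If `(c+1)‖F₂‖/γ ≤ 1`, then `‖e^{At}‖ ≤ c+1` for all `t ≥ 0`. -/
theorem exp_norm_le_of_dyson {N : ℕ}
    (B C : EuclideanSpace ℂ (Fin N) →L[ℂ] EuclideanSpace ℂ (Fin N))
    (c : ℕ) (γ nF2 : ℝ) (hγ : 0 < γ)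
    (hB : ∀ t : ℝ, 0 ≤ t → ‖exp (t • B)‖ ≤ Real.exp (-γ * t))
    (hnil : ∀ s : Fin (c + 1) → ℝ, (∀ i, 0 ≤ s i) →
      (List.ofFn fun i => exp (s i • B) * C).prod = 0)
    (hC : ‖C‖ ≤ ((c : ℝ) + 1) * nF2)
    (hcond : ((c : ℝ) + 1) * nF2 / γ ≤ 1) :
    ∀ t : ℝ, 0 ≤ t → ‖exp (t • (B + C))‖ ≤ (c : ℝ) + 1 := by
  intro t ht
  set β : ℝ := ((c : ℝ) + 1) * nF2 with hβdef
  have hβ : 0 ≤ β := le_trans (norm_nonneg C) hC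
  have hβγ : β ≤ γ := by
    rw [div_le_one hγ] at hcond
    exact hcond
  have hu : Continuous fun t : ℝ => exp (t • (B + C)) := expB_cont (B + C)
  have hzero : (dysonT B C)^[c + 1] (fun t => exp (t • (B + C))) t = 0 := by
    refine dysonT_iter_zero B C (c + 1) _ hu ?_ t ht
    intro s hs r hr
    rw [hnil s hs, zero_mul]
  have hsum := dyson_sum B C (c + 1) t
  rw [hzero, add_zero] at hsum
  rw [hsum]
  calc ‖∑ k ∈ Finset.range (c + 1), (dysonT B C)^[k] (fun t => exp (t • B)) t‖
      ≤ ∑ k ∈ Finset.range (c + 1), ‖(dysonT B C)^[k] (fun t => exp (t • B)) t‖ :=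
        norm_sum_le _ _
    _ ≤ ∑ k ∈ Finset.range (c + 1), (1 : ℝ) := by
        refine Finset.sum_le_sum fun k _ => ?_
        refine (dyson_iterE_bound B C hβ hB hC k t ht).trans ?_
        have h1 : (β * t) ^ k ≤ (γ * t) ^ k :=
          pow_le_pow_left₀ (mul_nonneg hβ ht) (mul_le_mul_of_nonneg_right hβγ ht) k
        have h2 : (γ * t) ^ k / k ! ≤ Real.exp (γ * t) := by
          have hsum : ∑ i ∈ Finset.range (k + 1), (γ * t) ^ i / i ! ≤ Real.exp (γ * t) :=
            Real.sum_le_exp_of_nonneg (mul_nonneg hγ.le ht) (k + 1)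
          refine le_trans ?_ hsum
          refine Finset.single_le_sum (f := fun i => (γ * t) ^ i / (i ! : ℝ)) ?_ ?_
          · intro i _
            positivity
          · exact Finset.self_mem_range_succ k
        calc Real.exp (-γ * t) * (β * t) ^ k / k !
            ≤ Real.exp (-γ * t) * (γ * t) ^ k / k ! := by
              gcongr
          _ = Real.exp (-γ * t) * ((γ * t) ^ k / k !) := by ring
          _ ≤ Real.exp (-γ * t) * Real.exp (γ * t) := by
              gcongr
          _ = 1 := by rw [← Real.exp_add, neg_mul, neg_add_cancel, Real.exp_zero]
    _ = (c : ℝ) + 1 := by simp
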